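/- In the lower-bound instance for the social welfare price of JR: let k = s^2 for some integer s > 1, with k voters and candidates {a_1,...,a_k, b_1,...,b_{k-s}}, where voters 1..s each approve all of {a_1,...,a_k} and voter s+i approves only {b_i} for i = 1,...,k-s. Then any size-k committee providing JR must contain all of b_1,...,b_{k-s}, and consequently has social welfare at most 2k - sqrt(k), while the committee {a_1,...,a_k} has social welfare k*sqrt(k). -/

import Mathlib

/-- Social welfare of a committee `W`: total number of approvals of its members. -/
def swF {V C : Type*} [Fintype V] [DecidableEq C] (A : V → Finset C) (W : Finset C) : ℕ :=
  ∑ i : V, ((A i) ∩ W).card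

/-- `W` provides justified representation: every cohesive group of at least
`n/k` voters (i.e. with `n ≤ k * |N'|`) contains a represented voter. -/
def providesJR {V C : Type*} [Fintype V] [DecidableEq C] (A : V → Finset C) (k : ℕ)
    (W : Finset C) : Prop :=
  ∀ N' : Finset V, Fintype.card V ≤ k * N'.card →
    (∃ c : C, ∀ i ∈ N', c ∈ A i) → ∃ i ∈ N', ((A i) ∩ W).Nonempty

/-- Lower-bound instance for the social welfare price of JR: `k = s²` voters,
candidates `a_1,…,a_k` (`Sum.inl`) and `b_1,…,b_{k-s}` (`Sum.inr`); voters with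
index `< s` approve all `a`-candidates, voter `s + j` approves exactly `b_j`.
Any size-`k` JR committee contains every `b_j` and has social welfare at most
`2k - s = 2k - √k`, whereas `{a_1,…,a_k}` has social welfare `k·s = k·√k`. -/
theorem stmt0 (s k : ℕ) (hs : 1 < s) (hk : k = s ^ 2)
    (A : Fin k → Finset (Fin k ⊕ Fin (k - s)))
    (hA1 : ∀ i : Fin k, (i : ℕ) < s → A i = Finset.univ.image Sum.inl)
    (hA2 : ∀ i : Fin k, s ≤ (i : ℕ) →
      ∀ c, c ∈ A i ↔ ∃ j : Fin (k - s), c = Sum.inr j ∧ (i : ℕ) = s + (j : ℕ)) :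
    (∀ W : Finset (Fin k ⊕ Fin (k - s)), W.card = k → providesJR A k W →
      (∀ j : Fin (k - s), Sum.inr j ∈ W) ∧ swF A W ≤ 2 * k - s) ∧
    swF A (Finset.univ.image (Sum.inl : Fin k → Fin k ⊕ Fin (k - s))) = k * s := by
  have hss : s * s = k := by nlinarith
  have hsk : s ≤ k := by nlinarith
  -- A i is a singleton for i ≥ s
  have hsingle : ∀ i : Fin k, s ≤ (i : ℕ) →
      ∃ j : Fin (k - s), A i = {Sum.inr j} ∧ (i : ℕ) = s + (j : ℕ) := by
    intro i hi
    have hj : (i : ℕ) - s < k - s := by omega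
    refine ⟨⟨(i : ℕ) - s, hj⟩, ?_, by simp; omega⟩
    ext c
    rw [hA2 i hi]
    simp only [Finset.mem_singleton]
    constructor
    · rintro ⟨j, rfl, hij⟩
      congr 1
      ext
      simp
      omega
    · rintro rfl
      exact ⟨_, rfl, by simp; omega⟩
  constructor
  · intro W hWcard hJR
    have hb : ∀ j : Fin (k - s), Sum.inr j ∈ W := by
      intro j
      have hjk : s + (j : ℕ) < k := by have := j.isLt; omega
      set i : Fin k := ⟨s + (j : ℕ), hjk⟩ with hidef
      have hi : s ≤ (i : ℕ) := by simp [hidef]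
      obtain ⟨j', hAij, hij⟩ := hsingle i hi
      have hjj : j' = j := by
        have : (i : ℕ) = s + (j : ℕ) := rfl
        ext
        omega
      subst hjj
      have hne := hJR {i} (by simp)
        ⟨Sum.inr j', by intro x hx; simp at hx; subst hx; rw [hAij]; simp⟩
      obtain ⟨i', hi', c, hc⟩ := hne
      simp only [Finset.mem_singleton] at hi'
      subst hi'
      rw [hAij] at hc
      simp only [Finset.mem_inter, Finset.mem_singleton] at hc
      rw [← hc.1]
      exact hc.2
    refine ⟨hb, ?_⟩
    -- the inl-part of W has at most s elements
    have hinl : ((Finset.univ.image (Sum.inl : Fin k → Fin k ⊕ Fin (k - s))) ∩ W).card ≤ s := by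
      have hsub : (Finset.univ.image (Sum.inr : Fin (k-s) → Fin k ⊕ Fin (k - s))) ⊆ W := by
        intro c hc
        simp only [Finset.mem_image, Finset.mem_univ, true_and] at hc
        obtain ⟨j, rfl⟩ := hc
        exact hb j
      have hdisj : Disjoint ((Finset.univ.image (Sum.inl : Fin k → Fin k ⊕ Fin (k - s))) ∩ W)
          (Finset.univ.image (Sum.inr : Fin (k-s) → Fin k ⊕ Fin (k - s))) := by
        rw [Finset.disjoint_left]
        rintro c hc hc'
        simp only [Finset.mem_inter, Finset.mem_image, Finset.mem_univ, true_and] at hc hc'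
        obtain ⟨⟨x, rfl⟩, _⟩ := hc
        obtain ⟨y, hy⟩ := hc'
        cases hy
      have hcard2 : (Finset.univ.image (Sum.inr : Fin (k-s) → Fin k ⊕ Fin (k - s))).card = k - s := by
        rw [Finset.card_image_of_injective _ Sum.inr_injective, Finset.card_univ, Fintype.card_fin]
      have hunion : ((Finset.univ.image (Sum.inl : Fin k → Fin k ⊕ Fin (k - s))) ∩ W)
          ∪ (Finset.univ.image (Sum.inr : Fin (k-s) → Fin k ⊕ Fin (k - s))) ⊆ W :=
        Finset.union_subset (Finset.inter_subset_right) hsub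
      have := Finset.card_le_card hunion
      rw [Finset.card_union_of_disjoint hdisj, hcard2, hWcard] at this
      omega
    have hbound : ∀ i : Fin k, ((A i) ∩ W).card ≤ if (i : ℕ) < s then s else 1 := by
      intro i
      by_cases h : (i : ℕ) < s
      · simp only [h, if_true]
        rw [hA1 i h]
        exact hinl
      · simp only [h, if_false]
        obtain ⟨j, hAij, _⟩ := hsingle i (by omega)
        calc ((A i) ∩ W).card ≤ (A i).card := Finset.card_le_card Finset.inter_subset_left
          _ = 1 := by rw [hAij]; simp
    calc swF A W ≤ ∑ i : Fin k, if (i : ℕ) < s then s else 1 :=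
          Finset.sum_le_sum (fun i _ => hbound i)
      _ = ∑ j ∈ Finset.range k, if j < s then s else 1 := by
          exact Fin.sum_univ_eq_sum_range (fun j => if j < s then s else 1) k
      _ = 2 * k - s := by
          rw [Finset.range_eq_Ico, ← Finset.sum_Ico_consecutive _ (Nat.zero_le s) hsk]
          rw [Finset.sum_ite_of_true, Finset.sum_ite_of_false]
          · simp [Finset.sum_const, Nat.card_Ico]
            omega
          · intro j hj; simp only [Finset.mem_Ico] at hj; omega
          · intro j hj; simp only [Finset.mem_Ico] at hj; omega
  · have hval : ∀ i : Fin k,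
        ((A i) ∩ (Finset.univ.image (Sum.inl : Fin k → Fin k ⊕ Fin (k - s)))).card
          = if (i : ℕ) < s then k else 0 := by
      intro i
      by_cases h : (i : ℕ) < s
      · simp only [h, if_true]
        rw [hA1 i h, Finset.inter_self,
          Finset.card_image_of_injective _ Sum.inl_injective, Finset.card_univ, Fintype.card_fin]
      · simp only [h, if_false]
        obtain ⟨j, hAij, _⟩ := hsingle i (by omega)
        rw [hAij, Finset.card_eq_zero, Finset.eq_empty_iff_forall_notMem]
        intro c hc
        simp only [Finset.mem_inter, Finset.mem_singleton, Finset.mem_image,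
          Finset.mem_univ, true_and] at hc
        obtain ⟨rfl, x, hx⟩ := hc
        cases hx
    calc swF A _ = ∑ i : Fin k, if (i : ℕ) < s then k else 0 := by
          unfold swF; exact Finset.sum_congr rfl (fun i _ => hval i)
      _ = ∑ j ∈ Finset.range k, if j < s then k else 0 := by
          exact Fin.sum_univ_eq_sum_range (fun j => if j < s then k else 0) k
      _ = k * s := by
          rw [Finset.range_eq_Ico, ← Finset.sum_Ico_consecutive _ (Nat.zero_le s) hsk]
          rw [Finset.sum_ite_of_true, Finset.sum_ite_of_false]
          · simp [Finset.sum_const, Nat.card_Ico, Nat.mul_comm]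
          · intro j hj; simp only [Finset.mem_Ico] at hj; omega
          · intro j hj; simp only [Finset.mem_Ico] at hj; omega
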